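/- If Splitter wins the (ℓ, m, r)-splitter game on a graph G, then for every k ≥ 1, Splitter wins the (ℓ, k·m, r)-splitter game on the lexicographic product G • K_k. -/

import Mathlib

/-- Vertices reachable from `v` by a walk of length at most `r` staying inside `A`
(the `r`-neighbourhood of `v` in the subgraph induced on `A`). -/
def ballIn {V : Type*} (G : SimpleGraph V) (A : Set V) (r : ℕ) (v : V) : Set V :=
  {w | ∃ p : G.Walk v w, p.length ≤ r ∧ ∀ x ∈ p.support, x ∈ A}

/-- Splitter has a winning strategy in the `(ℓ, m, r)`-splitter game on the subgraph
of `G` induced on the vertex set `A`: either `A` is already empty, or for every move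
`v` of Connector, Splitter can pick `W v ⊆ N_r(v)` with `|W v| ≤ m` and win the
remaining game with one round fewer on `N_r(v) \ W v`. -/
inductive SplitterWins {V : Type*} (G : SimpleGraph V) (m r : ℕ) : ℕ → Set V → Prop
  | empty (ℓ : ℕ) {A : Set V} : A = ∅ → SplitterWins G m r ℓ A
  | step (ℓ : ℕ) {A : Set V} (W : V → Finset V)
      (hsub : ∀ v ∈ A, ↑(W v) ⊆ ballIn G A r v)
      (hcard : ∀ v ∈ A, (W v).card ≤ m)
      (hrec : ∀ v ∈ A, SplitterWins G m r ℓ (ballIn G A r v \ ↑(W v))) :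
      SplitterWins G m r (ℓ + 1) A

/-- The lexicographic product of two simple graphs. -/
def lexProd {V W : Type*} (G : SimpleGraph V) (H : SimpleGraph W) :
    SimpleGraph (V × W) where
  Adj p q := G.Adj p.1 q.1 ∨ (p.1 = q.1 ∧ H.Adj p.2 q.2)
  symm := by
    constructor
    rintro p q (h | ⟨h1, h2⟩)
    · exact Or.inl h.symm
    · exact Or.inr ⟨h1.symm, h2.symm⟩
  loopless := by
    constructor
    rintro p (h | ⟨_, h⟩)
    · exact G.loopless.irrefl _ h
    · exact H.loopless.irrefl _ h

lemma ballIn_mono {V : Type*} (G : SimpleGraph V) {A A' : Set V} (hA : A' ⊆ A)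
    (r : ℕ) (v : V) : ballIn G A' r v ⊆ ballIn G A r v := by
  rintro w ⟨p, hl, hs⟩
  exact ⟨p, hl, fun x hx => hA (hs x hx)⟩

lemma splitterWins_mono {V : Type*} {G : SimpleGraph V} {m r : ℕ} :
    ∀ {ℓ : ℕ} {A : Set V}, SplitterWins G m r ℓ A →
      ∀ A' ⊆ A, SplitterWins G m r ℓ A' := by
  intro ℓ A h
  induction h with
  | empty ℓ hA =>
    intro A' hA'
    exact .empty ℓ (Set.subset_eq_empty (hA ▸ hA') rfl)
  | step ℓ W hsub hcard hrec ih =>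
    intro A' hA'
    classical
    refine .step ℓ (fun v => (W v).filter (· ∈ ballIn G A' r v)) ?_ ?_ ?_
    · intro v _ x hx
      exact (Finset.mem_filter.mp hx).2
    · intro v hv
      exact (Finset.card_filter_le _ _).trans (hcard v (hA' hv))
    · intro v hv
      refine ih v (hA' hv) _ ?_
      rintro x ⟨hx, hx2⟩
      refine ⟨ballIn_mono G hA' r v hx, fun hxW => hx2 ?_⟩
      exact Finset.mem_coe.mpr (Finset.mem_filter.mpr ⟨hxW, hx⟩)

lemma proj_walk {V : Type*} {k : ℕ} (G : SimpleGraph V) (B : Set V) :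
    ∀ {a x : V × Fin k} (p : (lexProd G (⊤ : SimpleGraph (Fin k))).Walk a x),
      (∀ y ∈ p.support, y.1 ∈ B) →
      ∃ q : G.Walk a.1 x.1, q.length ≤ p.length ∧ ∀ z ∈ q.support, z ∈ B := by
  intro a x p
  induction p with
  | nil =>
    intro hs
    refine ⟨SimpleGraph.Walk.nil, le_refl _, ?_⟩
    intro z hz
    simp only [SimpleGraph.Walk.support_nil, List.mem_singleton] at hz
    subst hz; exact hs _ (by simp)
  | @cons a u x h p ih =>
    intro hs
    obtain ⟨q', hq'l, hq's⟩ := ih (fun y hy => hs y (by simp [hy]))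
    rcases h with hG | ⟨he, _⟩
    · refine ⟨SimpleGraph.Walk.cons hG q', Nat.succ_le_succ hq'l, ?_⟩
      intro z hz
      simp only [SimpleGraph.Walk.support_cons, List.mem_cons] at hz
      rcases hz with rfl | h2
      · exact hs a (by simp)
      · exact hq's z h2
    · refine ⟨q'.copy he.symm rfl, ?_, ?_⟩
      · simp only [SimpleGraph.Walk.length_copy]
        exact hq'l.trans (Nat.le_succ _)
      · simpa using hq's

lemma ballIn_lex_proj {V : Type*} {k : ℕ} (G : SimpleGraph V) (B : Set V) (r : ℕ)
    {v : V × Fin k} {x : V × Fin k}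
    (hx : x ∈ ballIn (lexProd G (⊤ : SimpleGraph (Fin k))) (Prod.fst ⁻¹' B) r v) :
    x.1 ∈ ballIn G B r v.1 := by
  obtain ⟨p, hl, hs⟩ := hx
  obtain ⟨q, hql, hqs⟩ := proj_walk G B p hs
  exact ⟨q, hql.trans hl, hqs⟩

lemma splitterWins_lex_preimage {V : Type*} (G : SimpleGraph V) (m r k : ℕ) :
    ∀ {ℓ : ℕ} {B : Set V}, SplitterWins G m r ℓ B →
      SplitterWins (lexProd G (⊤ : SimpleGraph (Fin k))) (k * m) r ℓ
        (Prod.fst ⁻¹' B) := by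
  intro ℓ B h
  induction h with
  | empty ℓ hB =>
    exact .empty ℓ (by simp [hB])
  | @step ℓ B W hsub hcard hrec ih =>
    classical
    set H := lexProd G (⊤ : SimpleGraph (Fin k)) with hH
    set B' : Set (V × Fin k) := Prod.fst ⁻¹' B with hB'
    refine .step ℓ
      (fun p => ((W p.1) ×ˢ (Finset.univ : Finset (Fin k))).filter
        (· ∈ ballIn H B' r p)) ?_ ?_ ?_
    · intro v _ x hx
      exact (Finset.mem_filter.mp hx).2
    · intro v hv
      calc _ ≤ ((W v.1) ×ˢ (Finset.univ : Finset (Fin k))).card :=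
            Finset.card_filter_le _ _
        _ = (W v.1).card * k := by simp [Finset.card_product]
        _ ≤ m * k := Nat.mul_le_mul_right k (hcard v.1 hv)
        _ = k * m := Nat.mul_comm m k
    · intro v hv
      refine splitterWins_mono (ih v.1 hv) _ ?_
      rintro x ⟨hx, hx2⟩
      refine ⟨(ballIn_lex_proj G B r hx : x.1 ∈ _), fun hxW => hx2 ?_⟩
      exact Finset.mem_coe.mpr (Finset.mem_filter.mpr
        ⟨Finset.mem_product.mpr ⟨hxW, Finset.mem_univ _⟩, hx⟩)

/-- If Splitter wins the (ℓ, m, r)-splitter game on G, then for every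
k ≥ 1 Splitter wins the (ℓ, k·m, r)-splitter game on the lexicographic product
G • K_k. -/
theorem splitterWins_lexProd {V : Type*} (G : SimpleGraph V) (ℓ m r k : ℕ)
    (hk : 1 ≤ k) (h : SplitterWins G m r ℓ Set.univ) :
    SplitterWins (lexProd G (⊤ : SimpleGraph (Fin k))) (k * m) r ℓ Set.univ := by
  have := splitterWins_lex_preimage G m r k h
  simpa using this
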